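/- Let R' and R'' be R-cross-sections of the semigroup IS_m ≀_p IS_n and let φ: R' → R'' be a semigroup isomorphism. Then there exists an element Θ = (ϑ, θ) of the wreath product S_m ≀ S_n (i.e. a permutation θ of N_n and a function ϑ from N_n to the symmetric group S_m) such that φ((f,a)) = Θ^{-1}(f,a)Θ for all (f,a) ∈ R'. Explicitly: if (g,b) = φ((f,a)), then dom(b) = θ(dom(a)); for every x ∈ dom(a), (xa)θ = (xθ)b; and for every x ∈ dom(a), g(xθ) = ϑ(x)^{-1} f(x) ϑ(xa). -/

import Mathlib

open scoped Classical

/-- `IS n` is the full inverse symmetric semigroup: all partial bijections of `Fin n`;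
multiplication is composition of partial maps (maps acting on the right). -/
abbrev IS (n : ℕ) : Type := PEquiv (Fin n) (Fin n)

noncomputable section
namespace ISW

instance {n : ℕ} : Mul (IS n) := ⟨PEquiv.trans⟩
instance {n : ℕ} : One (IS n) := ⟨PEquiv.refl _⟩

/-- The domain of a partial bijection. -/
def pdom {n : ℕ} (f : IS n) : Set (Fin n) := {x | (f x).isSome}

/-- The range of a partial bijection. -/
def pran {n : ℕ} (f : IS n) : Set (Fin n) := {y | (f.symm y).isSome}

/-- Green's R-relation on a semigroup (with identity): `u R v` iff `uS = vS`. -/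
def GreenR {S : Type*} [Mul S] (u v : S) : Prop :=
  {w | ∃ s, w = u * s} = {w | ∃ s, w = v * s}

/-- Green's L-relation on a semigroup (with identity): `u L v` iff `Su = Sv`. -/
def GreenL {S : Type*} [Mul S] (u v : S) : Prop :=
  {w | ∃ s, w = s * u} = {w | ∃ s, w = s * v}

/-- An R-cross-section: a subsemigroup containing exactly one element of every
Green R-class. -/
def IsRCrossSection {S : Type*} [Mul S] (T : Set S) : Prop :=
  (∀ a ∈ T, ∀ b ∈ T, a * b ∈ T) ∧ ∀ x : S, ∃! t, t ∈ T ∧ GreenR x t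

/-- An L-cross-section: a subsemigroup containing exactly one element of every
Green L-class. -/
def IsLCrossSection {S : Type*} [Mul S] (T : Set S) : Prop :=
  (∀ a ∈ T, ∀ b ∈ T, a * b ∈ T) ∧ ∀ x : S, ∃! t, t ∈ T ∧ GreenL x t

/-- `φ` realizes a semigroup isomorphism from `T₁` onto `T₂`. -/
def IsSemiIso {S₁ S₂ : Type*} [Mul S₁] [Mul S₂] (T₁ : Set S₁) (T₂ : Set S₂)
    (φ : S₁ → S₂) : Prop :=
  Set.BijOn φ T₁ T₂ ∧ ∀ a ∈ T₁, ∀ b ∈ T₁, φ (a * b) = φ a * φ b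

/-- The partial wreath product `IS m ≀_p IS n`: pairs `(f, a)` with `a ∈ IS n` and
`f` a partial map from `Fin n` to `IS m` whose domain equals the domain of `a`. -/
structure PW (m n : ℕ) where
  base : IS n
  fib : Fin n → Option (IS m)
  dom_eq : ∀ x, (fib x).isSome ↔ (base x).isSome

/-- Multiplication of the partial wreath product: `(f,a)·(g,b) = (f g^a, ab)`. -/
instance {m n : ℕ} : Mul (PW m n) where
  mul u v :=
    { base := u.base * v.base
      fib := fun x => Option.map₂ (· * ·) (u.fib x) ((u.base x).bind v.fib)
      dom_eq := by
        intro x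
        show _ ↔ (((u.base x).bind v.base)).isSome
        cases h : u.base x with
        | none =>
          have : u.fib x = none := by
            have := (u.dom_eq x)
            simp [h] at this
            simpa using Option.not_isSome_iff_eq_none.mp (by simp [this])
          simp [h, this, Option.map₂]
        | some y =>
          have hf : (u.fib x).isSome := (u.dom_eq x).mpr (by simp [h])
          obtain ⟨s, hs⟩ := Option.isSome_iff_exists.mp hf
          cases h2 : v.base y with
          | none =>
            have : v.fib y = none := by
              have := (v.dom_eq y)
              simp [h2] at this
              simpa using Option.not_isSome_iff_eq_none.mp (by simp [this])
            simp [h, h2, hs, this, Option.map₂]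
          | some z =>
            have hg : (v.fib y).isSome := (v.dom_eq y).mpr (by simp [h2])
            obtain ⟨t, ht⟩ := Option.isSome_iff_exists.mp hg
            simp [h, h2, hs, ht, Option.map₂] }

/-- The identity of the partial wreath product. -/
instance {m n : ℕ} : One (PW m n) where
  one :=
    { base := 1
      fib := fun _ => some 1
      dom_eq := by intro x; simp; rfl }

/-- `chainFun L j x`: with `L` listing the elements of a block in increasing order and
`0 ≤ j < |L|` (`j` is the 0-based version of the paper's index), this is the value at `x` of
the chain `a_{i,j}`: the partial bijection with domain everything except `L[j]`,
sending `L[l] ↦ L[l+1]` for `l < j` and fixing all other points. -/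
def chainFun {n : ℕ} (L : List (Fin n)) (j : ℕ) (x : Fin n) : Option (Fin n) :=
  if x ∈ L then
    if L.idxOf x = j then none
    else if L.idxOf x < j then L[L.idxOf x + 1]?
    else some x
  else some x

/-- The generators `a_{i,j}` attached to an ordered decomposition with blocks `B i`. -/
def RGens {n s : ℕ} (B : Fin s → List (Fin n)) : Set (IS n) :=
  {a : IS n | ∃ i : Fin s, ∃ j : ℕ, j < (B i).length ∧ ∀ x, a x = chainFun (B i) j x}

/-- `R(M⃗₁, …, M⃗ₛ)`: the subsemigroup of `IS n` generated by the chains `a_{i,j}`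
together with the identity map. -/
def RSec {n s : ℕ} (B : Fin s → List (Fin n)) : Set (IS n) :=
  (Subsemigroup.closure (RGens B ∪ {1}) : Subsemigroup (IS n))

/-- A decomposition of `Fin n` into disjoint nonempty blocks, each block equipped with
a linear order, recorded by listing the elements of each block in increasing order. -/
structure OrderedPartition (n s : ℕ) where
  B : Fin s → List (Fin n)
  nonempty : ∀ i, B i ≠ []
  nodup : ∀ i, (B i).Nodup
  disjoint : ∀ i j, i ≠ j → ∀ x, x ∈ B i → x ∉ B j
  cover : ∀ x, ∃ i, x ∈ B i

/-- The chain `a_{i,j}` of the block listed by `L`, viewed inside `IS(M_i)`, i.e. embedded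
into `IS n` as a partial bijection whose domain is contained in the block: it is defined on
`L` minus `L[j]`, sends `L[l] ↦ L[l+1]` for `l < j` and fixes the other points of `L`. -/
def chainFunB {n : ℕ} (L : List (Fin n)) (j : ℕ) (x : Fin n) : Option (Fin n) :=
  if x ∈ L then
    if L.idxOf x = j then none
    else if L.idxOf x < j then L[L.idxOf x + 1]?
    else some x
  else none

/-- The generators of `R(M⃗)` inside `IS(M)` (embedded in `IS n`), `M` listed by `L`. -/
def BlockGens {n : ℕ} (L : List (Fin n)) : Set (IS n) :=
  {a : IS n | ∃ j : ℕ, j < L.length ∧ ∀ x, a x = chainFunB L j x}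

/-- The identity of `IS(M)` (embedded in `IS n`): the identity map of the block listed by `L`. -/
def idOn {n : ℕ} (L : List (Fin n)) : Set (IS n) :=
  {a : IS n | ∀ x, a x = if x ∈ L then some x else none}

/-- The R-cross-section `R(M⃗)` of `IS(M)`, embedded into `IS n`, for the block listed by `L`. -/
def RSecBlock {n : ℕ} (L : List (Fin n)) : Set (IS n) :=
  (Subsemigroup.closure (BlockGens L ∪ idOn L) : Subsemigroup (IS n))

/-- The wreath product `R_i ≀_p R(M⃗_i)` where `R(M⃗_i) ⊆ IS(M_i)`, `M_i` listed by `L`,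
and `R_i = T ⊆ IS m`, realized inside `PW m n` via the natural embedding
`IS m ≀_p IS(M_i) ⊆ IS m ≀_p IS n`. -/
def WBlock (m n : ℕ) (L : List (Fin n)) (T : Set (IS m)) : Set (PW m n) :=
  {u : PW m n | u.base ∈ RSecBlock L ∧ ∀ x f, u.fib x = some f → f ∈ T}

/-- The element `e' = (0̄, 1)` of `IS m ≀_p IS n`: the second component is the identity of
`IS n` and the first component sends every point to the empty map `0` of `IS m`. -/
def ezero (m n : ℕ) : PW m n where
  base := 1
  fib := fun _ => some ⊥
  dom_eq := by intro x; simp; rfl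


/-! ### Auxiliary development for the proof of Statement 13 -/

section Aux

variable {m n : ℕ}

theorem PW.ext' {u v : PW m n} (hb : u.base = v.base) (hf : u.fib = v.fib) : u = v := by
  cases u; cases v; simp_all

theorem pw_base_mul (u v : PW m n) (x : Fin n) :
    (u * v).base x = (u.base x).bind v.base := rfl

theorem pw_fib_mul (u v : PW m n) (x : Fin n) :
    (u * v).fib x = Option.map₂ (· * ·) (u.fib x) ((u.base x).bind v.fib) := rfl

theorem pw_base_one (x : Fin n) : (1 : PW m n).base x = some x := rfl

theorem pw_fib_one (x : Fin n) : (1 : PW m n).fib x = some 1 := rfl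

theorem is_mul_apply (f g : IS m) (p : Fin m) : (f * g) p = (f p).bind g := rfl

theorem is_one_apply (p : Fin m) : (1 : IS m) p = some p := rfl

theorem is_mul_one (f : IS m) : f * 1 = f := by
  ext p; cases hf : f p <;> simp [is_mul_apply, is_one_apply, hf]

theorem is_mul_assoc (f g h : IS m) : f * g * h = f * (g * h) := by
  ext p; simp only [is_mul_apply]; cases f p <;> simp [is_mul_apply]


theorem pw_fib_none {u : PW m n} {x : Fin n} (hb : u.base x = none) : u.fib x = none := by
  have := u.dom_eq x
  rw [hb] at this
  simpa using Option.not_isSome_iff_eq_none.mp (by simp [this])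

theorem pw_fib_some {u : PW m n} {x : Fin n} {y : Fin n} (hb : u.base x = some y) :
    ∃ f, u.fib x = some f :=
  Option.isSome_iff_exists.mp ((u.dom_eq x).mpr (by simp [hb]))

theorem pw_mul_one (u : PW m n) : u * 1 = u := by
  refine PW.ext' ?_ ?_
  · ext x; cases hb : u.base x <;> simp [pw_base_mul, pw_base_one, hb]
  · funext x
    rw [pw_fib_mul]
    cases hb : u.base x with
    | none =>
      have : u.fib x = none := pw_fib_none hb
      simp [hb, this]
    | some y =>
      obtain ⟨f, hf⟩ := pw_fib_some hb
      simp [hb, hf, pw_fib_one, Option.map₂, is_mul_one]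

theorem pw_mul_assoc (u v w : PW m n) : u * v * w = u * (v * w) := by
  refine PW.ext' ?_ ?_
  · ext x
    simp only [pw_base_mul]
    cases u.base x <;> simp [pw_base_mul]
  · funext x
    simp only [pw_fib_mul, pw_base_mul]
    cases hb : u.base x with
    | none =>
      have : u.fib x = none := pw_fib_none hb
      simp [this, Option.map₂]
    | some y =>
      obtain ⟨f, hf⟩ := pw_fib_some hb
      cases hb2 : v.base y with
      | none =>
        have : v.fib y = none := pw_fib_none hb2
        simp [hf, this, hb2, Option.map₂]
      | some z =>
        obtain ⟨g, hg⟩ := pw_fib_some hb2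
        cases hw : w.fib z with
        | none => simp [hf, hg, hb2, hw, Option.map₂]
        | some h => simp [hf, hg, hb2, hw, Option.map₂, is_mul_assoc]

end Aux
section Aux2

variable {m n : ℕ}

/-- The "domain data" of an element of the partial wreath product. -/
def dat (u : PW m n) : Fin n → Option (Set (Fin m)) :=
  fun x => (u.fib x).map (fun f => {p | (f p).isSome})

/-- Pointwise order on data. -/
def dle (d e : Fin n → Option (Set (Fin m))) : Prop :=
  ∀ x s, d x = some s → ∃ s', e x = some s' ∧ s ⊆ s'

theorem dle_refl (d : Fin n → Option (Set (Fin m))) : dle d d :=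
  fun _ s hs => ⟨s, hs, subset_rfl⟩

theorem dle_antisymm {d e : Fin n → Option (Set (Fin m))} (h : dle d e) (h' : dle e d) :
    d = e := by
  funext x
  cases hd : d x with
  | none =>
    cases he : e x with
    | none => rfl
    | some s =>
      obtain ⟨s', hs', _⟩ := h' x s he
      rw [hd] at hs'; exact absurd hs' (by simp)
  | some s =>
    obtain ⟨s', hs', hss⟩ := h x s hd
    obtain ⟨s'', hs'', hss'⟩ := h' x s' hs'
    rw [hd] at hs''
    have hse : s = s'' := Option.some_inj.mp hs''
    subst hse
    rw [hs', Set.Subset.antisymm hss hss']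

theorem dat_isSome_iff (u : PW m n) (x : Fin n) :
    (dat u x).isSome ↔ (u.base x).isSome := by
  rw [← u.dom_eq x]; simp [dat]

theorem dat_none {u : PW m n} {x : Fin n} (hb : u.base x = none) : dat u x = none := by
  simp [dat, pw_fib_none hb]

theorem dat_some {u : PW m n} {x : Fin n} {f : IS m} (hf : u.fib x = some f) :
    dat u x = some {p | (f p).isSome} := by simp [dat, hf]

/-- The data of `u * v` as a function of `u` and the data of `v`. -/
def Gd (u : PW m n) (e : Fin n → Option (Set (Fin m))) : Fin n → Option (Set (Fin m)) :=
  fun x => ((u.base x).bind e).map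
    (fun s => {p | ∃ q ∈ s, ∃ f, u.fib x = some f ∧ f p = some q})

theorem dat_mul (u v : PW m n) : dat (u * v) = Gd u (dat v) := by
  funext x
  cases hb : u.base x with
  | none =>
    have h1 : (u * v).base x = none := by simp [pw_base_mul, hb]
    simp [Gd, hb, dat_none h1]
  | some y =>
    obtain ⟨f, hf⟩ := pw_fib_some hb
    cases hb2 : v.base y with
    | none =>
      have h1 : (u * v).base x = none := by simp [pw_base_mul, hb, hb2]
      simp [Gd, hb, dat_none h1, dat_none hb2]
    | some z =>
      obtain ⟨g, hg⟩ := pw_fib_some hb2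
      have h1 : (u * v).fib x = some (f * g) := by
        simp [pw_fib_mul, hb, hf, hg, Option.map₂]
      rw [dat_some h1, Gd, hb, Option.bind_some, dat_some hg, Option.map_some]
      congr 1
      ext p
      simp only [Set.mem_setOf_eq, is_mul_apply, hf]
      constructor
      · intro hp
        cases hfp : f p with
        | none => rw [hfp] at hp; simp at hp
        | some q =>
          rw [hfp] at hp; simp at hp
          exact ⟨q, hp, f, rfl, hfp⟩
      · rintro ⟨q, hq, f', hf', hfp⟩
        have : f = f' := Option.some_inj.mp hf'
        subst this
        rw [hfp]; simpa using hq
end Aux2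
section Aux3

variable {m n : ℕ}

theorem pe_inj {k : ℕ} {f : IS k} {a b q : Fin k} (ha : f a = some q) (hb : f b = some q) :
    a = b := by
  have h1 : f.symm q = some a := f.eq_some_iff.mpr ha
  have h2 : f.symm q = some b := f.eq_some_iff.mpr hb
  rw [h1] at h2; exact Option.some_inj.mp h2

theorem dle_gd (u : PW m n) (e : Fin n → Option (Set (Fin m))) : dle (Gd u e) (dat u) := by
  intro x s hs
  simp only [Gd] at hs
  cases hb : u.base x with
  | none => rw [hb] at hs; simp at hs
  | some y =>
    rw [hb] at hs
    simp only [Option.bind_some] at hs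
    obtain ⟨f, hf⟩ := pw_fib_some hb
    refine ⟨{p | (f p).isSome}, dat_some hf, ?_⟩
    cases he : e y with
    | none => rw [he] at hs; simp at hs
    | some s0 =>
      rw [he] at hs
      simp only [Option.bind_some, Option.map_some, Option.some_inj] at hs
      subst hs
      rintro p ⟨q, _, f', hf', hfp⟩
      have : f = f' := Option.some_inj.mp (hf ▸ hf')
      subst this
      simp [Set.mem_setOf_eq, hfp]

theorem dle_mul (u v : PW m n) : dle (dat (u * v)) (dat u) := by
  rw [dat_mul]; exact dle_gd u (dat v)

/-- "u⁻¹ * v" for elements of the partial wreath product. -/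
def ldiv (u v : PW m n) : PW m n where
  base := u.base.symm.trans v.base
  fib := fun x => Option.map₂ (fun f g => PEquiv.trans f.symm g)
    ((u.base.symm x).bind u.fib) ((u.base.symm x).bind v.fib)
  dom_eq := by
    intro x
    show _ ↔ ((u.base.symm x).bind v.base).isSome
    cases hs : u.base.symm x with
    | none => simp [hs, Option.map₂]
    | some y =>
      have hband : u.base y = some x := u.base.eq_some_iff.mp hs
      obtain ⟨f, hf⟩ := pw_fib_some hband
      cases hv : v.base y with
      | none => simp [hs, hf, pw_fib_none hv, hv, Option.map₂]
      | some z =>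
        obtain ⟨g, hg⟩ := pw_fib_some hv
        simp [hs, hf, hg, hv, Option.map₂]

theorem mul_ldiv (u v : PW m n) (h : dat u = dat v) : u * ldiv u v = v := by
  have hdom : ∀ x, (u.base x).isSome ↔ (v.base x).isSome := by
    intro x; rw [← dat_isSome_iff, ← dat_isSome_iff, h]
  refine PW.ext' ?_ ?_
  · apply PEquiv.ext
    intro x
    show (u.base x).bind (ldiv u v).base = v.base x
    cases hb : u.base x with
    | none =>
      have : v.base x = none := by
        have := hdom x; rw [hb] at this
        exact Option.not_isSome_iff_eq_none.mp (by simpa using this.symm.mp)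
      simp [this]
    | some y =>
      have hs : u.base.symm y = some x := u.base.eq_some_iff.mpr hb
      show ((u.base.symm y).bind v.base) = v.base x
      rw [hs]; rfl
  · funext x
    rw [pw_fib_mul]
    cases hb : u.base x with
    | none =>
      have hvb : v.base x = none := by
        have := hdom x; rw [hb] at this
        exact Option.not_isSome_iff_eq_none.mp (by simpa using this.symm.mp)
      simp [pw_fib_none hb, pw_fib_none hvb, Option.map₂]
    | some y =>
      obtain ⟨f, hf⟩ := pw_fib_some hb
      have hvb : (v.base x).isSome := (hdom x).mp (by simp [hb])
      obtain ⟨z, hz⟩ := Option.isSome_iff_exists.mp hvb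
      obtain ⟨g, hg⟩ := pw_fib_some hz
      have hs : u.base.symm y = some x := u.base.eq_some_iff.mpr hb
      have hfib : (ldiv u v).fib y = some (PEquiv.trans f.symm g) := by
        show Option.map₂ _ ((u.base.symm y).bind u.fib) ((u.base.symm y).bind v.fib) = _
        rw [hs]; simp [hf, hg, Option.map₂]
      rw [Option.bind_some, hfib, hf, hg]
      simp only [Option.map₂, Option.bind_some, Option.map_some, Option.some_inj]
      apply PEquiv.ext
      intro p
      have hdomf : ∀ p, (f p).isSome ↔ (g p).isSome := by
        intro p
        have h1 : dat u x = some {p | (f p).isSome} := dat_some hf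
        have h2 : dat v x = some {p | (g p).isSome} := dat_some hg
        have hset : ({p | (f p).isSome} : Set (Fin m)) = {p | (g p).isSome} :=
          Option.some_inj.mp (by rw [← h1, h, h2])
        simpa using Set.ext_iff.mp hset p
      show (f.trans (f.symm.trans g)) p = g p
      show (f p).bind (fun q => (f.symm q).bind g) = g p
      cases hfp : f p with
      | none =>
        have : g p = none := by
          have := hdomf p; rw [hfp] at this
          exact Option.not_isSome_iff_eq_none.mp (by simpa using this.symm.mp)
        simp [this]
      | some q =>
        have : f.symm q = some p := f.eq_some_iff.mpr hfp
        simp [this]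

theorem green_iff (u v : PW m n) : GreenR u v ↔ dat u = dat v := by
  constructor
  · intro hg
    have hu : u ∈ {w | ∃ s, w = v * s} := by
      rw [← hg]; exact ⟨1, (pw_mul_one u).symm⟩
    have hv : v ∈ {w | ∃ s, w = u * s} := by
      rw [hg]; exact ⟨1, (pw_mul_one v).symm⟩
    obtain ⟨s, hs⟩ := hu
    obtain ⟨t, ht⟩ := hv
    refine dle_antisymm ?_ ?_
    · rw [hs]; exact dle_mul v s
    · rw [ht]; exact dle_mul u t
  · intro h
    have h1 : u * ldiv u v = v := mul_ldiv u v h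
    have h2 : v * ldiv v u = u := mul_ldiv v u h.symm
    apply Set.eq_of_subset_of_subset
    · rintro w ⟨s, rfl⟩
      exact ⟨ldiv v u * s, by rw [← pw_mul_assoc, h2]⟩
    · rintro w ⟨s, rfl⟩
      exact ⟨ldiv u v * s, by rw [← pw_mul_assoc, h1]⟩

end Aux3
section Aux4

variable {m n : ℕ}

/-- The partial identity on a set. -/
def pid {k : ℕ} (s : Set (Fin k)) : IS k where
  toFun x := if x ∈ s then some x else none
  invFun x := if x ∈ s then some x else none
  inv a b := by
    by_cases ha : a ∈ s <;> by_cases hb : b ∈ s <;>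
      simp [ha, hb, Option.mem_def, eq_comm] <;> rintro rfl <;> simp_all

/-- A canonical element with given data. -/
def cand (d : Fin n → Option (Set (Fin m))) : PW m n where
  base := pid {x | (d x).isSome}
  fib := fun x => (d x).map (fun s => pid s)
  dom_eq := by
    intro x
    show ((d x).map (fun s => pid s)).isSome ↔ (pid {x | (d x).isSome} x).isSome
    cases hd : d x <;> simp [hd, pid]

theorem dat_cand (d : Fin n → Option (Set (Fin m))) : dat (cand d) = d := by
  funext x
  cases hd : d x with
  | none =>
    have : (cand d).fib x = none := by simp [cand, hd]
    simp [dat, this]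
  | some s =>
    have : (cand d).fib x = some (pid s) := by simp [cand, hd]
    rw [dat_some this]
    congr 1
    ext p
    by_cases hp : p ∈ s <;> simp [pid, hp]

/-- The representative in a cross-section with given data. -/
def rep (R : Set (PW m n)) (hR : IsRCrossSection R)
    (d : Fin n → Option (Set (Fin m))) : PW m n :=
  (hR.2 (cand d)).choose

theorem rep_mem (R : Set (PW m n)) (hR : IsRCrossSection R)
    (d : Fin n → Option (Set (Fin m))) : rep R hR d ∈ R :=
  (hR.2 (cand d)).choose_spec.1.1

theorem rep_dat (R : Set (PW m n)) (hR : IsRCrossSection R)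
    (d : Fin n → Option (Set (Fin m))) : dat (rep R hR d) = d := by
  have h := (hR.2 (cand d)).choose_spec.1.2
  rw [green_iff] at h
  show dat (hR.2 (cand d)).choose = d
  rw [← h, dat_cand]

theorem rep_eq (R : Set (PW m n)) (hR : IsRCrossSection R)
    {t : PW m n} (ht : t ∈ R) : rep R hR (dat t) = t := by
  have h1 := (hR.2 (cand (dat t))).choose_spec
  have h2 : t ∈ R ∧ GreenR (cand (dat t)) t := ⟨ht, (green_iff _ _).mpr (dat_cand _)⟩
  exact (h1.2 t h2).symm

theorem dat_injOn (R : Set (PW m n)) (hR : IsRCrossSection R) :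
    ∀ t ∈ R, ∀ t' ∈ R, dat t = dat t' → t = t' := by
  intro t ht t' ht' h
  rw [← rep_eq R hR ht, ← rep_eq R hR ht', h]

end Aux4
section Aux5

variable {m n : ℕ}

instance : Nonempty (PW m n) := ⟨1⟩

variable (R' R'' : Set (PW m n)) (hR' : IsRCrossSection R') (hR'' : IsRCrossSection R'')
variable (φ : PW m n → PW m n) (hφ : IsSemiIso R' R'' φ)

/-- The induced map on data. -/
def Psi (d : Fin n → Option (Set (Fin m))) : Fin n → Option (Set (Fin m)) :=
  dat (φ (rep R' hR' d))

theorem psi_dat {t : PW m n} (ht : t ∈ R') : Psi R' hR' φ (dat t) = dat (φ t) := by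
  unfold Psi; rw [rep_eq R' hR' ht]

theorem psi_gd (hφ : IsSemiIso R' R'' φ) {t : PW m n} (ht : t ∈ R') (e : Fin n → Option (Set (Fin m))) :
    Psi R' hR' φ (Gd t e) = Gd (φ t) (Psi R' hR' φ e) := by
  set t' := rep R' hR' e with ht'def
  have ht' : t' ∈ R' := rep_mem R' hR' e
  have hdat' : dat t' = e := rep_dat R' hR' e
  have h1 : dat (t * t') = Gd t e := by rw [dat_mul, hdat']
  have h2 : t * t' ∈ R' := hR'.1 t ht t' ht'
  calc Psi R' hR' φ (Gd t e) = Psi R' hR' φ (dat (t * t')) := by rw [h1]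
    _ = dat (φ (t * t')) := psi_dat R' hR' φ h2
    _ = dat (φ t * φ t') := by rw [hφ.2 t ht t' ht']
    _ = Gd (φ t) (dat (φ t')) := dat_mul _ _
    _ = Gd (φ t) (Psi R' hR' φ e) := by rw [← psi_dat R' hR' φ ht', hdat']

/-- Pushforward of data along an element: a right divisor witness. -/
theorem gd_surj_of_dle {u : PW m n} {d : Fin n → Option (Set (Fin m))}
    (h : dle d (dat u)) : ∃ e, Gd u e = d := by
  classical
  refine ⟨fun y => (u.base.symm y).bind
    (fun x => (d x).map (fun s => {q | ∃ p ∈ s, ∃ f, u.fib x = some f ∧ f p = some q})), ?_⟩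
  funext x
  cases hb : u.base x with
  | none =>
    cases hd : d x with
    | none => simp [Gd, hb]
    | some s =>
      obtain ⟨s', hs', _⟩ := h x s hd
      rw [dat_none hb] at hs'
      exact absurd hs' (by simp)
  | some y =>
    have hs : u.base.symm y = some x := u.base.eq_some_iff.mpr hb
    obtain ⟨f, hf⟩ := pw_fib_some hb
    cases hd : d x with
    | none => simp [Gd, hb, hs, hd]
    | some s =>
      have hsub : s ⊆ {p | (f p).isSome} := by
        obtain ⟨s', hs', hss⟩ := h x s hd
        rw [dat_some hf] at hs'
        exact (Option.some_inj.mp hs') ▸ hss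
      simp only [Gd, hb, Option.bind_some, hs, hd, Option.map_some, Option.some_inj]
      ext p
      simp only [Set.mem_setOf_eq]
      constructor
      · rintro ⟨q, ⟨p', hp', f', hf', hfp'⟩, f'', hf'', hfp''⟩
        have e1 : f = f' := Option.some_inj.mp (hf ▸ hf')
        have e2 : f = f'' := Option.some_inj.mp (hf ▸ hf'')
        subst e1; subst e2
        have : p = p' := pe_inj hfp'' hfp'
        exact this ▸ hp'
      · intro hp
        have hpf : (f p).isSome := hsub hp
        obtain ⟨q, hq⟩ := Option.isSome_iff_exists.mp hpf
        exact ⟨q, ⟨p, hp, f, hf, hq⟩, f, hf, hq⟩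

theorem psi_mono (hφ : IsSemiIso R' R'' φ) {d e : Fin n → Option (Set (Fin m))} (hde : dle d e) :
    dle (Psi R' hR' φ d) (Psi R' hR' φ e) := by
  set t := rep R' hR' e with htdef
  have ht : t ∈ R' := rep_mem R' hR' e
  have hdat : dat t = e := rep_dat R' hR' e
  obtain ⟨e₂, he₂⟩ := gd_surj_of_dle (u := t) (d := d) (by rw [hdat]; exact hde)
  have : Psi R' hR' φ d = Gd (φ t) (Psi R' hR' φ e₂) := by
    rw [← he₂, psi_gd R' R'' hR' φ hφ ht]
  rw [this]
  have h2 : dle (Gd (φ t) (Psi R' hR' φ e₂)) (dat (φ t)) := dle_gd _ _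
  have h3 : dat (φ t) = Psi R' hR' φ e := by rw [← hdat, psi_dat R' hR' φ ht]
  rw [← h3]; exact h2

end Aux5
section Aux6

variable {m n : ℕ}
variable (R' R'' : Set (PW m n))
variable (φ : PW m n → PW m n)

theorem inv_leftcomp (hφ : IsSemiIso R' R'' φ) {t : PW m n} (ht : t ∈ R') :
    Function.invFunOn φ R' (φ t) = t :=
  hφ.1.invOn_invFunOn.1 ht

theorem inv_rightcomp (hφ : IsSemiIso R' R'' φ) {v : PW m n} (hv : v ∈ R'') :
    φ (Function.invFunOn φ R' v) = v :=
  hφ.1.invOn_invFunOn.2 hv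

theorem inv_semiiso (hR' : IsRCrossSection R') (hR'' : IsRCrossSection R'')
    (hφ : IsSemiIso R' R'' φ) :
    IsSemiIso R'' R' (Function.invFunOn φ R') := by
  constructor
  · refine ⟨hφ.1.surjOn.mapsTo_invFunOn, ?_, ?_⟩
    · intro a ha b hb hab
      rw [← inv_rightcomp R' R'' φ hφ ha, ← inv_rightcomp R' R'' φ hφ hb, hab]
    · intro t ht
      exact ⟨φ t, hφ.1.mapsTo ht, inv_leftcomp R' R'' φ hφ ht⟩
  · intro a ha b hb
    have hab : a * b ∈ R'' := hR''.1 a ha b hb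
    have h1 : Function.invFunOn φ R' a ∈ R' := hφ.1.surjOn.mapsTo_invFunOn ha
    have h2 : Function.invFunOn φ R' b ∈ R' := hφ.1.surjOn.mapsTo_invFunOn hb
    have h3 : Function.invFunOn φ R' a * Function.invFunOn φ R' b ∈ R' := hR'.1 _ h1 _ h2
    apply hφ.1.injOn (hφ.1.surjOn.mapsTo_invFunOn hab) h3
    rw [inv_rightcomp R' R'' φ hφ hab, hφ.2 _ h1 _ h2,
      inv_rightcomp R' R'' φ hφ ha, inv_rightcomp R' R'' φ hφ hb]

theorem psi_inv_psi (hR' : IsRCrossSection R') (hR'' : IsRCrossSection R'') (hφ : IsSemiIso R' R'' φ) (d : Fin n → Option (Set (Fin m))) :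
    Psi R'' hR'' (Function.invFunOn φ R') (Psi R' hR' φ d) = d := by
  set t := rep R' hR' d with htdef
  have ht : t ∈ R' := rep_mem R' hR' d
  have h1 : Psi R' hR' φ d = dat (φ t) := rfl
  have h2 : φ t ∈ R'' := hφ.1.mapsTo ht
  rw [h1, psi_dat R'' hR'' _ h2, inv_leftcomp R' R'' φ hφ ht, rep_dat]

theorem psi_psi_inv (hR' : IsRCrossSection R') (hR'' : IsRCrossSection R'') (hφ : IsSemiIso R' R'' φ) (d : Fin n → Option (Set (Fin m))) :
    Psi R' hR' φ (Psi R'' hR'' (Function.invFunOn φ R') d) = d := by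
  set v := rep R'' hR'' d with hvdef
  have hv : v ∈ R'' := rep_mem R'' hR'' d
  have h1 : Psi R'' hR'' (Function.invFunOn φ R') d = dat (Function.invFunOn φ R' v) := rfl
  have h2 : Function.invFunOn φ R' v ∈ R' := hφ.1.surjOn.mapsTo_invFunOn hv
  rw [h1, psi_dat R' hR' _ h2, inv_rightcomp R' R'' φ hφ hv, rep_dat]

end Aux6
section Aux7

variable {m n : ℕ}

/-- Coordinate data element. -/
def iot (x : Fin n) (s : Set (Fin m)) : Fin n → Option (Set (Fin m)) :=
  fun y => if y = x then some s else none

theorem iot_self (x : Fin n) (s : Set (Fin m)) : iot x s x = some s := by simp [iot]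

theorem iot_ne {x y : Fin n} (s : Set (Fin m)) (h : y ≠ x) : iot x s y = none := by
  simp [iot, h]

theorem iot_injective {x : Fin n} {s s' : Set (Fin m)}
    (h : iot x s = iot x s') : s = s' := by
  have := congrFun h x
  rw [iot_self, iot_self] at this
  exact Option.some_inj.mp this

theorem dle_iot_left {x : Fin n} {s : Set (Fin m)} {d : Fin n → Option (Set (Fin m))} :
    dle (iot x s) d ↔ ∃ s', d x = some s' ∧ s ⊆ s' := by
  constructor
  · intro h; exact h x s (iot_self x s)
  · rintro ⟨s', hs', hss⟩ y t ht
    by_cases hy : y = x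
    · subst hy
      rw [iot_self] at ht
      exact ⟨s', hs', (Option.some_inj.mp ht) ▸ hss⟩
    · rw [iot_ne s hy] at ht; simp at ht

theorem dle_iot_right {x : Fin n} {s : Set (Fin m)} {d : Fin n → Option (Set (Fin m))}
    (h : dle d (iot x s)) : ∀ y t, d y = some t → y = x ∧ t ⊆ s := by
  intro y t ht
  obtain ⟨s'', hs'', hts⟩ := h y t ht
  by_cases hy : y = x
  · subst hy
    rw [iot_self] at hs''
    exact ⟨rfl, (Option.some_inj.mp hs'') ▸ hts⟩
  · rw [iot_ne s hy] at hs''; simp at hs''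

/-- The bottom data. -/
def dbot : Fin n → Option (Set (Fin m)) := fun _ => none

theorem dle_dbot (d : Fin n → Option (Set (Fin m))) : dle dbot d := by
  intro x s hs; simp [dbot] at hs

theorem eq_dbot_of_dle {d : Fin n → Option (Set (Fin m))} (h : dle d dbot) : d = dbot := by
  funext x
  cases hd : d x with
  | none => rfl
  | some s => obtain ⟨s', hs', _⟩ := h x s hd; simp [dbot] at hs'

theorem iot_ne_dbot (x : Fin n) (s : Set (Fin m)) : iot x s ≠ dbot := by
  intro h
  have := congrFun h x
  rw [iot_self] at this; simp [dbot] at this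

section OrderIso

variable (Ψ Ψ' : (Fin n → Option (Set (Fin m))) → (Fin n → Option (Set (Fin m))))

theorem psi_dbot (hmono : ∀ d e, dle d e → dle (Ψ d) (Ψ e))
    (hri : ∀ d, Ψ (Ψ' d) = d) : Ψ dbot = dbot := by
  have h1 : dle dbot (Ψ' dbot) := dle_dbot _
  have h2 : dle (Ψ dbot) (Ψ (Ψ' dbot)) := hmono _ _ h1
  rw [hri] at h2
  exact eq_dbot_of_dle h2

theorem psi_ne_dbot (hmono' : ∀ d e, dle d e → dle (Ψ' d) (Ψ' e))
    (hli : ∀ d, Ψ' (Ψ d) = d)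
    {d : Fin n → Option (Set (Fin m))} (hd : d ≠ dbot) : Ψ d ≠ dbot := by
  intro h
  apply hd
  have := congrArg Ψ' h
  rw [hli] at this
  rw [this, psi_dbot Ψ' Ψ hmono' hli]

/-- Support transport: if `Ψ (iot x s)` is defined at `y`, then `Ψ (iot x ∅)` is
supported inside `{y}`. -/
theorem supp_key (hmono : ∀ d e, dle d e → dle (Ψ d) (Ψ e))
    (hmono' : ∀ d e, dle d e → dle (Ψ' d) (Ψ' e))
    (hli : ∀ d, Ψ' (Ψ d) = d) (hri : ∀ d, Ψ (Ψ' d) = d)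
    {x : Fin n} {s : Set (Fin m)} {y : Fin n}
    (hy : (Ψ (iot x s) y).isSome) :
    ∀ z t, Ψ (iot x ∅) z = some t → z = y := by
  intro z t hz
  obtain ⟨ty, hty⟩ := Option.isSome_iff_exists.mp hy
  have h1 : dle (iot y ∅) (Ψ (iot x s)) :=
    dle_iot_left.mpr ⟨ty, hty, Set.empty_subset _⟩
  have h2 : dle (Ψ' (iot y ∅)) (iot x s) := by
    have := hmono' _ _ h1
    rw [hli] at this
    exact this
  have h3 : Ψ' (iot y ∅) ≠ dbot := psi_ne_dbot Ψ' Ψ hmono hri (iot_ne_dbot y ∅)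
  -- Ψ' (iot y ∅) is supported in {x} and nonbot, hence defined at x
  have h4 : (Ψ' (iot y ∅) x).isSome := by
    by_contra hns
    apply h3
    funext w
    cases hw : Ψ' (iot y ∅) w with
    | none => rfl
    | some t' =>
      obtain ⟨hwx, _⟩ := dle_iot_right h2 w t' hw
      subst hwx
      rw [hw] at hns; simp at hns
  obtain ⟨tx, htx⟩ := Option.isSome_iff_exists.mp h4
  have h5 : dle (iot x ∅) (Ψ' (iot y ∅)) :=
    dle_iot_left.mpr ⟨tx, htx, Set.empty_subset _⟩
  have h6 : dle (Ψ (iot x ∅)) (iot y ∅) := by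
    have := hmono _ _ h5
    rw [hri] at this
    exact this
  exact (dle_iot_right h6 z t hz).1

/-- The support point of `Ψ (iot x s)` exists and is independent of `s`. -/
theorem supp_exists (hmono : ∀ d e, dle d e → dle (Ψ d) (Ψ e))
    (hmono' : ∀ d e, dle d e → dle (Ψ' d) (Ψ' e))
    (hli : ∀ d, Ψ' (Ψ d) = d) (hri : ∀ d, Ψ (Ψ' d) = d)
    (x : Fin n) (s : Set (Fin m)) :
    ∃ y t, Ψ (iot x s) = iot y t := by
  have hnb : Ψ (iot x s) ≠ dbot := psi_ne_dbot Ψ Ψ' hmono' hli (iot_ne_dbot x s)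
  have : ∃ y, (Ψ (iot x s) y).isSome := by
    by_contra hns
    push_neg at hns
    apply hnb
    funext w
    have := hns w
    exact Option.not_isSome_iff_eq_none.mp (by simpa using this)
  obtain ⟨y, hy⟩ := this
  obtain ⟨t, ht⟩ := Option.isSome_iff_exists.mp hy
  refine ⟨y, t, ?_⟩
  funext w
  by_cases hw : w = y
  · subst hw; rw [iot_self]; exact ht
  · rw [iot_ne t hw]
    cases hw2 : Ψ (iot x s) w with
    | none => rfl
    | some t' =>
      -- both w and y would pin the support of Ψ (iot x ∅)
      exfalso
      -- Ψ (iot x ∅) nonbot, supported in {w} and in {y}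
      have hnb0 : Ψ (iot x ∅) ≠ dbot := psi_ne_dbot Ψ Ψ' hmono' hli (iot_ne_dbot x ∅)
      have : ∃ z, (Ψ (iot x ∅) z).isSome := by
        by_contra hns
        push_neg at hns
        apply hnb0
        funext v
        exact Option.not_isSome_iff_eq_none.mp (by simpa using hns v)
      obtain ⟨z, hz⟩ := this
      obtain ⟨tz, htz⟩ := Option.isSome_iff_exists.mp hz
      have e1 : z = y := supp_key Ψ Ψ' hmono hmono' hli hri hy z tz htz
      have e2 : z = w := supp_key Ψ Ψ' hmono hmono' hli hri (by rw [hw2]; rfl) z tz htz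
      exact hw (e2 ▸ e1)

end OrderIso

end Aux7
section Aux8

variable {m n : ℕ}

theorem iot_eq_iot {x y : Fin n} {s t : Set (Fin m)} (h : iot x s = iot y t) :
    x = y ∧ s = t := by
  have hx := congrFun h x
  rw [iot_self] at hx
  by_cases hxy : x = y
  · subst hxy
    rw [iot_self] at hx
    exact ⟨rfl, Option.some_inj.mp hx⟩
  · rw [iot_ne t hxy] at hx; simp at hx

/-- Order automorphisms of the Boolean lattice of subsets of `Fin m` are induced by
permutations. -/
theorem pow_perm (σ τ : Set (Fin m) → Set (Fin m))
    (hmσ : ∀ s t, s ⊆ t → σ s ⊆ σ t) (hmτ : ∀ s t, s ⊆ t → τ s ⊆ τ t)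
    (hτσ : ∀ s, τ (σ s) = s) (hστ : ∀ t, σ (τ t) = t) :
    ∃ ϑ : Equiv.Perm (Fin m), ∀ s, σ s = ϑ '' s := by
  classical
  have hσe : σ ∅ = ∅ := by
    have h1 : σ ∅ ⊆ σ (τ ∅) := hmσ _ _ (Set.empty_subset _)
    rw [hστ] at h1
    exact Set.eq_empty_iff_forall_notMem.mpr (fun x hx => h1 hx)
  have hτe : τ ∅ = ∅ := by
    have h1 : τ ∅ ⊆ τ (σ ∅) := hmτ _ _ (Set.empty_subset _)
    rw [hτσ] at h1
    exact Set.eq_empty_iff_forall_notMem.mpr (fun x hx => h1 hx)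
  have hsing : ∀ w : Fin m, ∃ w', σ {w} = {w'} := by
    intro w
    have hne : σ {w} ≠ ∅ := by
      intro h
      have := congrArg τ h
      rw [hτσ, hτe] at this
      exact absurd this (by simp)
    obtain ⟨w', hw'⟩ := Set.nonempty_iff_ne_empty.mpr hne
    have h1 : τ {w'} ⊆ {w} := by
      have := hmτ {w'} (σ {w}) (Set.singleton_subset_iff.mpr hw')
      rwa [hτσ] at this
    have h2 : τ {w'} ≠ ∅ := by
      intro h
      have := congrArg σ h
      rw [hστ, hσe] at this
      exact absurd this (by simp)
    have h3 : τ {w'} = {w} := by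
      rcases Set.subset_singleton_iff_eq.mp h1 with h | h
      · exact absurd h h2
      · exact h
    refine ⟨w', ?_⟩
    rw [← h3, hστ]
  choose f hf using hsing
  have hinj : Function.Injective f := by
    intro a b hab
    have : σ {a} = σ {b} := by rw [hf, hf, hab]
    have := congrArg τ this
    rw [hτσ, hτσ] at this
    exact Set.singleton_eq_singleton_iff.mp this
  have hbij : Function.Bijective f := Finite.injective_iff_bijective.mp hinj
  refine ⟨Equiv.ofBijective f hbij, ?_⟩
  intro s
  apply Set.eq_of_subset_of_subset
  · intro q hq
    obtain ⟨w, rfl⟩ := hbij.2 q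
    have h1 : τ {f w} ⊆ s := by
      have := hmτ {f w} (σ s) (Set.singleton_subset_iff.mpr hq)
      rwa [hτσ] at this
    have h2 : τ {f w} = {w} := by
      have := congrArg τ (hf w)
      rw [hτσ] at this
      exact this.symm
    rw [h2] at h1
    exact ⟨w, h1 rfl, rfl⟩
  · rintro q ⟨w, hw, rfl⟩
    have h1 : σ {w} ⊆ σ s := hmσ _ _ (Set.singleton_subset_iff.mpr hw)
    rw [hf] at h1
    exact h1 rfl

/-- Classification of order automorphisms of the data poset. -/
theorem classify (Ψ Ψ' : (Fin n → Option (Set (Fin m))) → (Fin n → Option (Set (Fin m))))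
    (hmono : ∀ d e, dle d e → dle (Ψ d) (Ψ e))
    (hmono' : ∀ d e, dle d e → dle (Ψ' d) (Ψ' e))
    (hli : ∀ d, Ψ' (Ψ d) = d) (hri : ∀ d, Ψ (Ψ' d) = d) :
    ∃ (θ : Equiv.Perm (Fin n)) (ϑ : Fin n → Equiv.Perm (Fin m)),
      ∀ d x, Ψ d (θ x) = (d x).map (fun s => (ϑ x) '' s) := by
  classical
  choose yf tf hyt using supp_exists Ψ Ψ' hmono hmono' hli hri
  choose yf' tf' hyt' using supp_exists Ψ' Ψ hmono' hmono hri hli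
  -- support point is independent of the set
  have hyind : ∀ x s, yf x s = yf x ∅ := by
    intro x s
    have h1 : (Ψ (iot x s) (yf x s)).isSome := by rw [hyt x s, iot_self]; rfl
    have h2 : Ψ (iot x ∅) (yf x ∅) = some (tf x ∅) := by rw [hyt x ∅, iot_self]
    exact (supp_key Ψ Ψ' hmono hmono' hli hri h1 (yf x ∅) (tf x ∅) h2).symm
  have hyind' : ∀ x s, yf' x s = yf' x ∅ := by
    intro x s
    have h1 : (Ψ' (iot x s) (yf' x s)).isSome := by rw [hyt' x s, iot_self]; rfl
    have h2 : Ψ' (iot x ∅) (yf' x ∅) = some (tf' x ∅) := by rw [hyt' x ∅, iot_self]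
    exact (supp_key Ψ' Ψ hmono' hmono hri hli h1 (yf' x ∅) (tf' x ∅) h2).symm
  set θ0 : Fin n → Fin n := fun x => yf x ∅ with hθ0
  set θ0' : Fin n → Fin n := fun x => yf' x ∅ with hθ0'
  have h1 : ∀ x s, Ψ (iot x s) = iot (θ0 x) (tf x s) := by
    intro x s; rw [hyt x s, hyind x s]
  have h1' : ∀ x s, Ψ' (iot x s) = iot (θ0' x) (tf' x s) := by
    intro x s; rw [hyt' x s, hyind' x s]
  -- composition identities
  have hcomp : ∀ x s, θ0' (θ0 x) = x ∧ tf' (θ0 x) (tf x s) = s := by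
    intro x s
    have : iot x s = iot (θ0' (θ0 x)) (tf' (θ0 x) (tf x s)) := by
      rw [← h1' (θ0 x) (tf x s), ← h1 x s, hli]
    obtain ⟨he, hs⟩ := iot_eq_iot this
    exact ⟨he.symm, hs.symm⟩
  have hcomp' : ∀ y t, θ0 (θ0' y) = y ∧ tf (θ0' y) (tf' y t) = t := by
    intro y t
    have : iot y t = iot (θ0 (θ0' y)) (tf (θ0' y) (tf' y t)) := by
      rw [← h1 (θ0' y) (tf' y t), ← h1' y t, hri]
    obtain ⟨he, hs⟩ := iot_eq_iot this
    exact ⟨he.symm, hs.symm⟩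
  set θE : Equiv.Perm (Fin n) :=
    ⟨θ0, θ0', fun x => (hcomp x ∅).1, fun y => (hcomp' y ∅).1⟩ with hθE
  -- monotonicity of the coordinate maps
  have hmσ : ∀ x s t, s ⊆ t → tf x s ⊆ tf x t := by
    intro x s t hst
    have hd : dle (iot x s) (iot x t) := by
      intro y s' hy
      by_cases hyx : y = x
      · subst hyx; rw [iot_self] at hy
        exact ⟨t, iot_self _ t, (Option.some_inj.mp hy) ▸ hst⟩
      · rw [iot_ne s hyx] at hy; simp at hy
    have := hmono _ _ hd
    rw [h1 x s, h1 x t] at this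
    obtain ⟨s'', hs'', hsub⟩ := this (θ0 x) (tf x s) (iot_self _ _)
    rw [iot_self] at hs''
    exact (Option.some_inj.mp hs'') ▸ hsub
  have hmτ : ∀ x s t, s ⊆ t → tf' x s ⊆ tf' x t := by
    intro x s t hst
    have hd : dle (iot x s) (iot x t) := by
      intro y s' hy
      by_cases hyx : y = x
      · subst hyx; rw [iot_self] at hy
        exact ⟨t, iot_self _ t, (Option.some_inj.mp hy) ▸ hst⟩
      · rw [iot_ne s hyx] at hy; simp at hy
    have := hmono' _ _ hd
    rw [h1' x s, h1' x t] at this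
    obtain ⟨s'', hs'', hsub⟩ := this (θ0' x) (tf' x s) (iot_self _ _)
    rw [iot_self] at hs''
    exact (Option.some_inj.mp hs'') ▸ hsub
  -- powerset permutations
  have hστ : ∀ (x : Fin n) t, tf x (tf' (θ0 x) t) = t := by
    intro x t
    have := (hcomp' (θ0 x) t).2
    rwa [(hcomp x ∅).1] at this
  have hpp : ∀ x : Fin n, ∃ ϑ : Equiv.Perm (Fin m), ∀ s, tf x s = ϑ '' s := by
    intro x
    exact pow_perm (tf x) (tf' (θ0 x)) (hmσ x) (hmτ (θ0 x))
      (fun s => (hcomp x s).2) (hστ x)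
  choose ϑf hϑf using hpp
  refine ⟨θE, ϑf, ?_⟩
  intro d x
  show Ψ d (θ0 x) = (d x).map fun s => ϑf x '' s
  cases hd : d x with
  | none =>
    cases hpsi : Ψ d (θ0 x) with
    | none => simp
    | some t =>
      exfalso
      have hdle : dle (iot (θ0 x) ∅) (Ψ d) := dle_iot_left.mpr ⟨t, hpsi, Set.empty_subset _⟩
      have h2 : dle (Ψ' (iot (θ0 x) ∅)) d := by
        have := hmono' _ _ hdle; rwa [hli] at this
      rw [h1' (θ0 x) ∅, (hcomp x ∅).1] at h2
      obtain ⟨s', hs', _⟩ := h2 x (tf' (θ0 x) ∅) (iot_self _ _)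
      rw [hd] at hs'; simp at hs'
  | some s =>
    have hdle : dle (iot x s) d := dle_iot_left.mpr ⟨s, hd, subset_rfl⟩
    have h2 := hmono _ _ hdle
    rw [h1 x s] at h2
    obtain ⟨t, ht, hsub⟩ := h2 (θ0 x) (tf x s) (iot_self _ _)
    have hdle2 : dle (iot (θ0 x) t) (Ψ d) := dle_iot_left.mpr ⟨t, ht, subset_rfl⟩
    have h3 : dle (Ψ' (iot (θ0 x) t)) d := by
      have := hmono' _ _ hdle2; rwa [hli] at this
    rw [h1' (θ0 x) t, (hcomp x ∅).1] at h3
    obtain ⟨s', hs', hsub2⟩ := h3 x (tf' (θ0 x) t) (iot_self _ _)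
    rw [hd] at hs'
    have hs's : s' = s := Option.some_inj.mp hs'.symm
    have hts : t ⊆ tf x s := by
      have hh : tf x (tf' (θ0 x) t) ⊆ tf x s := hmσ x _ _ (hs's ▸ hsub2)
      rwa [hστ x t] at hh
    have hteq : t = tf x s := Set.Subset.antisymm hts hsub
    rw [ht, hteq, hϑf x s]
    rfl

end Aux8
section Aux9

variable {m n : ℕ}

theorem piot {P : (Fin n → Option (Set (Fin m))) → (Fin n → Option (Set (Fin m)))}
    {θ : Equiv.Perm (Fin n)} {ϑ : Fin n → Equiv.Perm (Fin m)}
    (key : ∀ d x, P d (θ x) = (d x).map (fun s => (ϑ x) '' s))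
    (y : Fin n) (s : Set (Fin m)) :
    P (iot y s) = iot (θ y) ((ϑ y) '' s) := by
  funext w
  obtain ⟨z, rfl⟩ := θ.surjective w
  rw [key (iot y s) z]
  by_cases hz : z = y
  · subst hz
    rw [iot_self, iot_self]
    rfl
  · rw [iot_ne s hz, iot_ne _ (fun h => hz (θ.injective h))]
    rfl

theorem gdiot {v : PW m n} {x y : Fin n} {f : IS m}
    (hb : v.base x = some y) (hf : v.fib x = some f) (s : Set (Fin m)) :
    Gd v (iot y s) = iot x {p | ∃ q ∈ s, f p = some q} := by
  funext z
  by_cases hz : z = x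
  · subst hz
    rw [iot_self]
    simp only [Gd, hb, Option.bind_some, iot_self, Option.map_some, Option.some_inj]
    ext p
    simp only [Set.mem_setOf_eq]
    constructor
    · rintro ⟨q, hq, f', hf', hfp⟩
      have : f = f' := Option.some_inj.mp (hf ▸ hf')
      subst this
      exact ⟨q, hq, hfp⟩
    · rintro ⟨q, hq, hfp⟩
      exact ⟨q, hq, f, hf, hfp⟩
  · rw [iot_ne _ hz]
    simp only [Gd]
    cases hbz : v.base z with
    | none => rfl
    | some y' =>
      have hyy : y' ≠ y := by
        intro h
        subst h
        exact hz (pe_inj hbz hb)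
      rw [Option.bind_some, iot_ne _ hyy]
      rfl

end Aux9
/-- every isomorphism `φ` of R-cross-sections of `IS m ≀_p IS n` is a
conjugacy by an element `Θ = (ϑ, θ)` of `S_m ≀ S_n`: writing `(g,b) = φ((f,a))`,
`dom b = θ(dom a)`, `(x a) θ = (x θ) b`, and `g(x θ) = ϑ(x)⁻¹ f(x) ϑ(x a)`. -/
theorem iso_wreath_rcross_is_conjugacy (m n : ℕ) (R' R'' : Set (PW m n))
    (hR' : IsRCrossSection R') (hR'' : IsRCrossSection R'')
    (φ : PW m n → PW m n) (hφ : IsSemiIso R' R'' φ) :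
    ∃ (θ : Equiv.Perm (Fin n)) (ϑ : Fin n → Equiv.Perm (Fin m)),
      ∀ u ∈ R',
        (∀ x : Fin n, (u.base x).isSome ↔ ((φ u).base (θ x)).isSome) ∧
        (∀ x y : Fin n, u.base x = some y → (φ u).base (θ x) = some (θ y)) ∧
        (∀ x y : Fin n, ∀ f g : IS m, u.base x = some y →
          u.fib x = some f → (φ u).fib (θ x) = some g →
          ∀ w : Fin m, g w = (f ((ϑ x)⁻¹ w)).map (ϑ y)) := by
  classical
  set ψ := Function.invFunOn φ R' with hψdef
  have hψ : IsSemiIso R'' R' ψ := inv_semiiso R' R'' φ hR' hR'' hφ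
  set P : (Fin n → Option (Set (Fin m))) → (Fin n → Option (Set (Fin m))) :=
    Psi R' hR' φ with hPdef
  set P' : (Fin n → Option (Set (Fin m))) → (Fin n → Option (Set (Fin m))) :=
    Psi R'' hR'' ψ with hP'def
  have hli : ∀ d, P' (P d) = d := psi_inv_psi R' R'' φ hR' hR'' hφ
  have hri : ∀ d, P (P' d) = d := psi_psi_inv R' R'' φ hR' hR'' hφ
  have hPm : ∀ d e, dle d e → dle (P d) (P e) := fun d e h => psi_mono R' R'' hR' φ hφ h
  have hPm' : ∀ d e, dle d e → dle (P' d) (P' e) := fun d e h => psi_mono R'' R' hR'' ψ hψ h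
  obtain ⟨θ, ϑ, key⟩ := classify P P' hPm hPm' hli hri
  refine ⟨θ, ϑ, ?_⟩
  intro u hu
  have hPd : dat (φ u) = P (dat u) := (psi_dat R' hR' φ hu).symm
  have hkey : ∀ x, dat (φ u) (θ x) = (dat u x).map (fun s => (ϑ x) '' s) := by
    intro x; rw [hPd]; exact key (dat u) x
  -- condition 1
  have cond1 : ∀ x : Fin n, (u.base x).isSome ↔ ((φ u).base (θ x)).isSome := by
    intro x
    rw [← dat_isSome_iff, ← dat_isSome_iff, hkey x]
    cases dat u x <;> simp
  -- condition 2
  have cond2 : ∀ x y : Fin n, u.base x = some y → (φ u).base (θ x) = some (θ y) := by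
    intro x y hxy
    obtain ⟨f, hf⟩ := pw_fib_some hxy
    have hgd : P (Gd u (iot y ∅)) = Gd (φ u) (P (iot y ∅)) :=
      psi_gd R' R'' hR' φ hφ hu (iot y ∅)
    rw [gdiot hxy hf ∅, piot key, piot key] at hgd
    have := congrFun hgd (θ x)
    rw [iot_self] at this
    -- RHS at θ x must be some
    cases hb : (φ u).base (θ x) with
    | none => rw [Gd, hb] at this; simp at this
    | some z =>
      rw [Gd, hb, Option.bind_some] at this
      by_cases hz : z = θ y
      · rw [hz]
      · rw [iot_ne _ hz] at this; simp at this
  refine ⟨cond1, cond2, ?_⟩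
  -- condition 3
  intro x y f g hxy hfx hgx w
  have hb' : (φ u).base (θ x) = some (θ y) := cond2 x y hxy
  -- domain equality
  have hdomg : {w | (g w).isSome} = (ϑ x) '' {p | (f p).isSome} := by
    have h1 : dat (φ u) (θ x) = some {w | (g w).isSome} := dat_some hgx
    have h2 : dat u x = some {p | (f p).isSome} := dat_some hfx
    have := hkey x
    rw [h1, h2] at this
    simpa using this
  -- master set equation
  have master : ∀ s : Set (Fin m),
      (ϑ x) '' {p | ∃ q ∈ s, f p = some q} = {w | ∃ q' ∈ (ϑ y) '' s, g w = some q'} := by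
    intro s
    have hgd : P (Gd u (iot y s)) = Gd (φ u) (P (iot y s)) :=
      psi_gd R' R'' hR' φ hφ hu (iot y s)
    rw [gdiot hxy hfx s, piot key, piot key] at hgd
    have := congrFun hgd (θ x)
    rw [iot_self, Gd, hb', Option.bind_some, iot_self, Option.map_some,
      Option.some_inj] at this
    rw [this]
    ext w'
    simp only [Set.mem_setOf_eq]
    constructor
    · rintro ⟨q', hq', g', hg', hgw⟩
      have : g = g' := Option.some_inj.mp (hgx ▸ hg')
      subst this
      exact ⟨q', hq', hgw⟩
    · rintro ⟨q', hq', hgw⟩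
      exact ⟨q', hq', g, hgx, hgw⟩
  -- conclude pointwise
  set p := (ϑ x)⁻¹ w with hpdef
  have hwp : (ϑ x) p = w := by simp [hpdef]
  cases hfp : f p with
  | some q =>
    have hmem : w ∈ (ϑ x) '' {p' | ∃ q' ∈ ({q} : Set (Fin m)), f p' = some q'} :=
      ⟨p, ⟨q, rfl, hfp⟩, hwp⟩
    rw [master {q}] at hmem
    obtain ⟨q', hq', hgw⟩ := hmem
    obtain ⟨q₀, hq₀, rfl⟩ := hq'
    rw [Set.mem_singleton_iff] at hq₀
    subst hq₀
    rw [hgw]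
    rfl
  | none =>
    cases hgw : g w with
    | none => rfl
    | some r =>
      exfalso
      have : w ∈ {w' | (g w').isSome} := by simp [hgw]
      rw [hdomg] at this
      obtain ⟨p', hp', hpw⟩ := this
      have : p' = p := by
        apply (ϑ x).injective
        rw [hwp, hpw]
      rw [this] at hp'
      have hps : (f p).isSome := hp'
      rw [hfp] at hps
      simp at hps

end ISW
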